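/- Let Σ and Σ̄ be positive-definite real n×n matrices. The Kullback–Leibler divergence between the centered multivariate Gaussian measures N(0, Σ) and N(0, Σ̄) on ℝⁿ equals (1/2) * (Real.log Σ̄.det − Real.log Σ.det + (Σ̄⁻¹ * Σ).trace − n). -/

import Mathlib

open MeasureTheory
open scoped BigOperators Matrix

/-- The centered multivariate Gaussian measure `N(0, S)` on `Fin n → ℝ` with
positive-definite covariance matrix `S`, defined by its density with respect to
the Lebesgue measure. -/
noncomputable def multivariateGaussian {n : ℕ} (S : Matrix (Fin n) (Fin n) ℝ) :
    Measure (Fin n → ℝ) :=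
  volume.withDensity fun x =>
    ENNReal.ofReal (Real.sqrt (((2 * Real.pi) ^ n * S.det)⁻¹) *
      Real.exp (-(1 / 2) * (x ⬝ᵥ (S⁻¹ *ᵥ x))))

/-- The Kullback–Leibler divergence `KL(μ ‖ ν) = ∫ log (dμ/dν) dμ`. -/
noncomputable def klDiv {α : Type*} [MeasurableSpace α] (μ ν : Measure α) : ℝ :=
  ∫ x, MeasureTheory.llr μ ν x ∂μ

open scoped ENNReal NNReal

namespace KLMVG

open Matrix


noncomputable def f1 (t : ℝ) : ℝ := Real.exp (-(1/2) * t^2)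

@[simp] lemma f1_apply (t : ℝ) : f1 t = Real.exp (-(1/2) * t^2) := rfl

lemma rpow_two_eq (x : ℝ) : x ^ (2:ℝ) = x ^ 2 := by
  rw [show (2:ℝ) = ((2:ℕ):ℝ) by norm_num, Real.rpow_natCast]

lemma i_f1 : Integrable f1 := integrable_exp_neg_mul_sq (by norm_num : (0:ℝ) < 1/2)

lemma int_f1 : ∫ t, f1 t = Real.sqrt (2*Real.pi) := by
  rw [show (∫ t, f1 t) = ∫ t : ℝ, Real.exp (-(1/2) * t^2) from rfl, integral_gaussian]
  congr 1
  rw [div_div_eq_mul_div]; ring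

lemma i_tf1 : Integrable (fun t => t * f1 t) := by
  simpa only [f1_apply] using integrable_mul_exp_neg_mul_sq (by norm_num : (0:ℝ) < 1/2)

lemma int_tf1 : ∫ t, t * f1 t = 0 := by
  have h := integral_neg_eq_self (fun t : ℝ => t * f1 t) volume
  have e : ∀ x : ℝ, (-x) * f1 (-x) = -(x * f1 x) := fun x => by
    simp only [f1_apply, neg_sq]; ring
  simp only [e, integral_neg] at h
  linarith

lemma i_t2f1 : Integrable (fun t => t^2 * f1 t) := by
  have h := integrable_rpow_mul_exp_neg_mul_sq (by norm_num : (0:ℝ) < 1/2)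
    (by norm_num : (-1:ℝ) < 2)
  refine h.congr (Filter.Eventually.of_forall fun x => ?_)
  dsimp only [f1_apply]
  rw [rpow_two_eq]

lemma int_t2f1 : ∫ t, t^2 * f1 t = Real.sqrt (2*Real.pi) := by
  have h0 : (∫ t, t^2 * f1 t) = ∫ x : ℝ, |x|^2 * f1 |x| := by
    congr 1; ext x; simp [sq_abs]
  rw [h0, integral_comp_abs (f := fun t => t^2 * f1 t)]
  have h1 : (∫ x in Set.Ioi (0:ℝ), x^2 * f1 x)
      = ∫ x in Set.Ioi (0:ℝ), x ^ (2:ℝ) * Real.exp (-(1/2) * x ^ (2:ℝ)) := by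
    refine setIntegral_congr_fun measurableSet_Ioi fun x _ => ?_
    rw [rpow_two_eq]; rfl
  rw [h1, integral_rpow_mul_exp_neg_mul_rpow (by norm_num) (by norm_num) (by norm_num)]
  rw [show ((2:ℝ)+1)/2 = 1/2 + 1 by norm_num, Real.Gamma_add_one (by norm_num),
    Real.Gamma_one_half_eq]
  have h2 : ((1:ℝ)/2) ^ (-((2:ℝ)+1)/2) = (2:ℝ) ^ (((2:ℝ)+1)/2) := by
    rw [one_div, Real.inv_rpow (by norm_num), ← Real.rpow_neg (by norm_num)]
    norm_num
  have h3 : (2:ℝ) ^ (((2:ℝ)+1)/2) = 2 * Real.sqrt 2 := by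
    rw [show ((2:ℝ)+1)/2 = (1:ℝ) + (1/2:ℝ) by norm_num, Real.rpow_add (by norm_num),
      Real.rpow_one, ← Real.sqrt_eq_rpow]
  rw [h2, h3, Real.sqrt_mul (by norm_num : (0:ℝ) ≤ 2)]
  ring

variable {n : ℕ}

/-- standard gaussian (unnormalized) density on ℝⁿ -/
noncomputable def E0 (y : Fin n → ℝ) : ℝ := Real.exp (-(1/2) * ∑ i, (y i)^2)

lemma E0_eq_prod (y : Fin n → ℝ) : E0 y = ∏ k, f1 (y k) := by
  simp only [E0, f1_apply, Finset.mul_sum, ← Real.exp_sum]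

/-- per-coordinate factor -/
noncomputable def fk (i j k : Fin n) (t : ℝ) : ℝ :=
  (if k = i then t else 1) * ((if k = j then t else 1) * f1 t)

lemma prod_fk (i j : Fin n) (y : Fin n → ℝ) :
    (∏ k, fk i j k (y k)) = y i * (y j * E0 y) := by
  simp only [fk, E0_eq_prod]
  rw [Finset.prod_mul_distrib, Finset.prod_mul_distrib]
  congr 1
  · exact Finset.prod_ite_eq' Finset.univ i (fun k => y k) |>.trans (by simp)
  congr 1
  · exact Finset.prod_ite_eq' Finset.univ j (fun k => y k) |>.trans (by simp)

lemma fk_integrable (i j k : Fin n) : Integrable (fk i j k) := by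
  by_cases hi : k = i <;> by_cases hj : k = j
  · exact i_t2f1.congr (Filter.Eventually.of_forall fun t => by
      simp only [fk, if_pos hi, if_pos hj]; ring)
  · exact i_tf1.congr (Filter.Eventually.of_forall fun t => by
      simp only [fk, if_pos hi, if_neg hj, one_mul])
  · exact i_tf1.congr (Filter.Eventually.of_forall fun t => by
      simp only [fk, if_neg hi, if_pos hj, one_mul])
  · exact i_f1.congr (Filter.Eventually.of_forall fun t => by
      simp only [fk, if_neg hi, if_neg hj, one_mul])

lemma term_integrable (i j : Fin n) :
    Integrable (fun y : Fin n → ℝ => y i * (y j * E0 y)) := by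
  have := MeasureTheory.Integrable.fintype_prod (f := fun k : Fin n => fk i j k)
    (fun k => fk_integrable i j k)
  exact this.congr (Filter.Eventually.of_forall fun y => prod_fk i j y)

lemma int_fk_eq (i j k : Fin n) (hij : i = j) :
    ∫ t, fk i j k t = Real.sqrt (2*Real.pi) := by
  subst hij
  by_cases hi : k = i
  · subst hi
    rw [← int_t2f1]
    exact integral_congr_ae (Filter.Eventually.of_forall fun t => by
      simp only [fk, eq_self_iff_true, if_true]; ring)
  · rw [← int_f1]
    exact integral_congr_ae (Filter.Eventually.of_forall fun t => by
      simp only [fk, if_neg hi, one_mul])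

lemma term_integral (i j : Fin n) :
    ∫ y : Fin n → ℝ, y i * (y j * E0 y)
      = (if i = j then 1 else 0) * Real.sqrt (2*Real.pi) ^ n := by
  rw [show (fun y : Fin n → ℝ => y i * (y j * E0 y)) = fun y => ∏ k, fk i j k (y k) by
    ext y; rw [prod_fk]]
  rw [MeasureTheory.volume_pi, MeasureTheory.integral_fintype_prod_eq_prod (ι := Fin n) (fun k => fk i j k)]
  by_cases hij : i = j
  · rw [if_pos hij, Finset.prod_congr rfl fun k _ => int_fk_eq i j k hij]
    simp
  · rw [if_neg hij, zero_mul]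
    refine Finset.prod_eq_zero (Finset.mem_univ i) ?_
    rw [← int_tf1]
    exact integral_congr_ae (Filter.Eventually.of_forall fun t => by
      simp only [fk, eq_self_iff_true, if_true, if_neg hij, one_mul])

lemma int_E0 : ∫ y : Fin n → ℝ, E0 y = Real.sqrt (2*Real.pi) ^ n := by
  rw [show (fun y : Fin n → ℝ => E0 y) = fun y => ∏ k, f1 (y k) by ext y; exact E0_eq_prod y]
  rw [MeasureTheory.volume_pi, MeasureTheory.integral_fintype_prod_eq_pow (ι := Fin n) f1, int_f1, Fintype.card_fin]

lemma i_E0 : Integrable (E0 (n := n)) := by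
  have := MeasureTheory.Integrable.fintype_prod (f := fun _ : Fin n => f1) (fun _ => i_f1)
  exact this.congr (Filter.Eventually.of_forall fun y => (E0_eq_prod y).symm)

variable {n : ℕ}

noncomputable def gd (S : Matrix (Fin n) (Fin n) ℝ) (x : Fin n → ℝ) : ℝ :=
  Real.sqrt (((2 * Real.pi) ^ n * S.det)⁻¹) * Real.exp (-(1 / 2) * (x ⬝ᵥ (S⁻¹ *ᵥ x)))

lemma cont_quad (A : Matrix (Fin n) (Fin n) ℝ) :
    Continuous fun x : Fin n → ℝ => x ⬝ᵥ A *ᵥ x := by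
  simp only [dotProduct, Matrix.mulVec]
  exact continuous_finset_sum _ fun i _ =>
    (continuous_apply i).mul (continuous_finset_sum _ fun j _ =>
      (continuous_const.mul (continuous_apply j)))

lemma cont_gd (S : Matrix (Fin n) (Fin n) ℝ) : Continuous (gd S) :=
  continuous_const.mul ((continuous_const.mul (cont_quad S⁻¹)).rexp)

lemma gd_pos {S : Matrix (Fin n) (Fin n) ℝ} (hS : S.PosDef) (x : Fin n → ℝ) : 0 < gd S x := by
  apply mul_pos _ (Real.exp_pos _)
  apply Real.sqrt_pos.2
  have := hS.det_pos
  positivity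

-- sqrt matrix facts
lemma dot_R (R A : Matrix (Fin n) (Fin n) ℝ) (y : Fin n → ℝ) :
    (R *ᵥ y) ⬝ᵥ A *ᵥ (R *ᵥ y) = y ⬝ᵥ (Rᵀ * A * R) *ᵥ y := by
  calc (R *ᵥ y) ⬝ᵥ A *ᵥ (R *ᵥ y)
      = (y ᵥ* Rᵀ) ⬝ᵥ (A * R) *ᵥ y := by rw [Matrix.vecMul_transpose, Matrix.mulVec_mulVec]
    _ = y ⬝ᵥ Rᵀ *ᵥ ((A * R) *ᵥ y) := (dotProduct_mulVec y Rᵀ _).symm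
    _ = y ⬝ᵥ (Rᵀ * (A * R)) *ᵥ y := by rw [Matrix.mulVec_mulVec]
    _ = y ⬝ᵥ (Rᵀ * A * R) *ᵥ y := by rw [Matrix.mul_assoc]

section
variable {S : Matrix (Fin n) (Fin n) ℝ} (hS : S.PosDef)

open scoped MatrixOrder in
noncomputable def Rm (hS : S.PosDef) : Matrix (Fin n) (Fin n) ℝ := CFC.sqrt S

open scoped MatrixOrder in
lemma Rm_mul_self : Rm hS * Rm hS = S := CFC.sqrt_mul_sqrt_self S hS.posSemidef.nonneg
open scoped MatrixOrder in
lemma Rm_transpose : (Rm hS)ᵀ = Rm hS := (CFC.sqrt_nonneg S).posSemidef.1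
lemma Rm_det_sq : (Rm hS).det * (Rm hS).det = S.det := by
  rw [← Matrix.det_mul, Rm_mul_self]
lemma Rm_det_ne : (Rm hS).det ≠ 0 := by
  intro h
  have := Rm_det_sq hS
  rw [h, mul_zero] at this
  exact (ne_of_gt hS.det_pos) this.symm
lemma Rm_det_abs : |(Rm hS).det| = Real.sqrt S.det := by
  rw [← Rm_det_sq hS, Real.sqrt_mul_self_eq_abs]

lemma Rm_isUnit : IsUnit (Rm hS).det := isUnit_iff_ne_zero.2 (Rm_det_ne hS)

lemma Rm_quad (y : Fin n → ℝ) :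
    (Rm hS *ᵥ y) ⬝ᵥ S⁻¹ *ᵥ (Rm hS *ᵥ y) = ∑ i, (y i)^2 := by
  rw [dot_R, Rm_transpose]
  have h2 : S⁻¹ = (Rm hS)⁻¹ * (Rm hS)⁻¹ := by
    conv_lhs => rw [← Rm_mul_self hS]
    rw [Matrix.mul_inv_rev]
  have h1 : Rm hS * S⁻¹ * Rm hS = 1 := by
    rw [h2]
    simp only [Matrix.mul_assoc]
    rw [Matrix.nonsing_inv_mul _ (Rm_isUnit hS), Matrix.mul_one,
      Matrix.mul_nonsing_inv _ (Rm_isUnit hS)]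
  rw [h1, Matrix.one_mulVec]
  simp [dotProduct, sq]

-- measurable embedding
lemma Rm_emb : MeasurableEmbedding (fun y : Fin n → ℝ => Rm hS *ᵥ y) := by
  have hinv : Invertible (Rm hS) := (Rm hS).invertibleOfIsUnitDet (Rm_isUnit hS)
  let eL : (Fin n → ℝ) ≃ₗ[ℝ] (Fin n → ℝ) := Matrix.toLinearEquiv' (Rm hS) hinv
  have : (fun y : Fin n → ℝ => Rm hS *ᵥ y) = ⇑(eL.toContinuousLinearEquiv.toHomeomorph) := by
    ext y i; rfl
  rw [this]
  exact (eL.toContinuousLinearEquiv.toHomeomorph).measurableEmbedding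

lemma Rm_map : Measure.map (fun y : Fin n → ℝ => Rm hS *ᵥ y) volume
    = ENNReal.ofReal |(Rm hS).det|⁻¹ • volume := by
  have := Real.map_matrix_volume_pi_eq_smul_volume_pi (M := Rm hS) (Rm_det_ne hS)
  rw [show ⇑(Matrix.toLin' (Rm hS)) = fun y : Fin n → ℝ => Rm hS *ᵥ y from
    funext fun y => Matrix.toLin'_apply _ _] at this
  rw [this, abs_inv]
end


section
variable {S : Matrix (Fin n) (Fin n) ℝ} (hS : S.PosDef)

lemma gd_comp_Rm (y : Fin n → ℝ) :
    gd S (Rm hS *ᵥ y) = Real.sqrt (((2 * Real.pi) ^ n * S.det)⁻¹) * E0 y := by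
  rw [gd, Rm_quad hS, E0]

lemma const_eq : |(Rm hS).det| * Real.sqrt (((2 * Real.pi) ^ n * S.det)⁻¹)
    = Real.sqrt ((2 * Real.pi) ^ n)⁻¹ := by
  rw [Rm_det_abs hS, ← Real.sqrt_mul hS.det_pos.le]
  congr 1
  have h1 : S.det ≠ 0 := ne_of_gt hS.det_pos
  field_simp

lemma sqrt_pow' (x : ℝ) (hx : 0 ≤ x) (m : ℕ) : Real.sqrt (x ^ m) = Real.sqrt x ^ m := by
  induction m with
  | zero => simp
  | succ k ih => rw [pow_succ, pow_succ, Real.sqrt_mul (by positivity), ih]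

lemma const_norm : Real.sqrt ((2 * Real.pi) ^ n)⁻¹ * Real.sqrt (2 * Real.pi) ^ n = 1 := by
  have h2 : (0:ℝ) ≤ 2 * Real.pi := by positivity
  have h3 : (0:ℝ) < Real.sqrt ((2 * Real.pi) ^ n) := Real.sqrt_pos.2 (by positivity)
  rw [← sqrt_pow' _ h2, Real.sqrt_inv, inv_mul_cancel₀ h3.ne']
end

section
variable {S : Matrix (Fin n) (Fin n) ℝ}

lemma L2 (hS : S.PosDef) (φ : (Fin n → ℝ) → ℝ) :
    ∫ x, gd S x * φ x
      = Real.sqrt ((2 * Real.pi) ^ n)⁻¹ * ∫ y, E0 y * φ (Rm hS *ᵥ y) := by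
  have hd : |(Rm hS).det| ≠ 0 := abs_ne_zero.2 (Rm_det_ne hS)
  have habs : (ENNReal.ofReal |(Rm hS).det|⁻¹).toReal = |(Rm hS).det|⁻¹ :=
    ENNReal.toReal_ofReal (by positivity)
  have step1 : ∫ x, gd S x * φ x
      = |(Rm hS).det| * ∫ y, gd S (Rm hS *ᵥ y) * φ (Rm hS *ᵥ y) := by
    rw [← (Rm_emb hS).integral_map (fun x => gd S x * φ x), Rm_map hS,
      integral_smul_measure, habs, smul_eq_mul, ← mul_assoc,
      mul_inv_cancel₀ hd, one_mul]
  rw [step1]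
  have step2 : (fun y => gd S (Rm hS *ᵥ y) * φ (Rm hS *ᵥ y))
      = fun y => Real.sqrt (((2 * Real.pi) ^ n * S.det)⁻¹) * (E0 y * φ (Rm hS *ᵥ y)) := by
    ext y; rw [gd_comp_Rm hS]; ring
  rw [step2, integral_const_mul, ← mul_assoc, const_eq hS]

lemma L1 (hS : S.PosDef) (φ : (Fin n → ℝ) → ℝ) :
    Integrable (fun x => gd S x * φ x) volume
      ↔ Integrable (fun y => E0 y * φ (Rm hS *ᵥ y)) volume := by
  have hd : |(Rm hS).det| ≠ 0 := abs_ne_zero.2 (Rm_det_ne hS)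
  have hvol : (volume : Measure (Fin n → ℝ))
      = ENNReal.ofReal |(Rm hS).det| • Measure.map (fun y : Fin n → ℝ => Rm hS *ᵥ y) volume := by
    rw [Rm_map hS, smul_smul, ← ENNReal.ofReal_mul (abs_nonneg _),
      mul_inv_cancel₀ hd, ENNReal.ofReal_one, one_smul]
  rw [show Integrable (fun x => gd S x * φ x) volume
      ↔ Integrable (fun x => gd S x * φ x)
        (ENNReal.ofReal |(Rm hS).det| • Measure.map (fun y : Fin n → ℝ => Rm hS *ᵥ y) volume) from
    by rw [← hvol]]
  rw [integrable_smul_measure (by simp [ENNReal.ofReal_eq_zero, not_le, abs_pos, Rm_det_ne hS])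
    (by simp),
    (Rm_emb hS).integrable_map_iff]
  have hc : Real.sqrt (((2 * Real.pi) ^ n * S.det)⁻¹) ≠ 0 := by
    have : (0:ℝ) < gd S (fun _ => 0) := gd_pos hS _
    intro h; rw [gd] at this; rw [h] at this; simp at this
  constructor
  · intro h
    have h2 := h.const_mul (Real.sqrt (((2 * Real.pi) ^ n * S.det)⁻¹))⁻¹
    refine h2.congr (Filter.Eventually.of_forall fun y => ?_)
    simp only [Function.comp]
    rw [gd_comp_Rm hS, mul_assoc, ← mul_assoc (Real.sqrt (((2 * Real.pi) ^ n * S.det)⁻¹))⁻¹,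
      inv_mul_cancel₀ hc, one_mul]
  · intro h
    have h2 := h.const_mul (Real.sqrt (((2 * Real.pi) ^ n * S.det)⁻¹))
    refine h2.congr (Filter.Eventually.of_forall fun y => ?_)
    simp only [Function.comp]
    rw [gd_comp_Rm hS]; ring

lemma meas_gd_nnreal : Measurable fun x => (gd S x).toNNReal :=
  (continuous_real_toNNReal.comp (cont_gd S)).measurable

lemma mvg_eq : multivariateGaussian S
    = volume.withDensity fun x => ((gd S x).toNNReal : ℝ≥0∞) := rfl

lemma integral_mvg (hS : S.PosDef) (φ : (Fin n → ℝ) → ℝ) :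
    ∫ x, φ x ∂(multivariateGaussian S) = ∫ x, gd S x * φ x ∂volume := by
  rw [mvg_eq, integral_withDensity_eq_integral_smul (meas_gd_nnreal (S := S)) φ]
  congr 1; ext x
  rw [NNReal.smul_def, Real.coe_toNNReal _ (gd_pos hS x).le]
  rfl

lemma integrable_mvg_iff (hS : S.PosDef) (φ : (Fin n → ℝ) → ℝ) :
    Integrable φ (multivariateGaussian S) ↔ Integrable (fun x => gd S x * φ x) volume := by
  rw [mvg_eq, integrable_withDensity_iff_integrable_smul (meas_gd_nnreal (S := S))]
  refine integrable_congr (Filter.Eventually.of_forall fun x => ?_)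
  dsimp only
  rw [NNReal.smul_def, Real.coe_toNNReal _ (gd_pos hS x).le]
  rfl

lemma gd_integrable (hS : S.PosDef) : Integrable (gd S) volume := by
  have h := (L1 hS (fun _ => 1)).mpr (by
    refine i_E0.congr (Filter.Eventually.of_forall fun y => ?_); simp)
  exact h.congr (Filter.Eventually.of_forall fun x => by simp)

lemma gd_integral (hS : S.PosDef) : ∫ x, gd S x = 1 := by
  have h := L2 hS (fun _ => 1)
  simp only [mul_one] at h
  rw [h, int_E0, const_norm]

lemma mvg_univ (hS : S.PosDef) : multivariateGaussian S Set.univ = 1 := by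
  rw [show multivariateGaussian S
      = volume.withDensity (fun x => ENNReal.ofReal (gd S x)) from rfl,
    withDensity_apply _ MeasurableSet.univ, setLIntegral_univ,
    ← ofReal_integral_eq_lintegral_ofReal (gd_integrable hS)
      (Filter.Eventually.of_forall fun x => (gd_pos hS x).le),
    gd_integral hS, ENNReal.ofReal_one]

lemma mvg_isProb (hS : S.PosDef) : IsProbabilityMeasure (multivariateGaussian S) := ⟨mvg_univ hS⟩

lemma expand_quad (hS : S.PosDef) (A : Matrix (Fin n) (Fin n) ℝ) (y : Fin n → ℝ) :
    E0 y * ((Rm hS *ᵥ y) ⬝ᵥ A *ᵥ (Rm hS *ᵥ y))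
      = ∑ p : Fin n × Fin n,
          ((Rm hS)ᵀ * A * Rm hS) p.1 p.2 * (y p.1 * (y p.2 * E0 y)) := by
  rw [dot_R]
  simp only [dotProduct, Matrix.mulVec, Fintype.sum_prod_type, Finset.mul_sum,
    Finset.sum_mul]
  refine Finset.sum_congr rfl fun i _ => Finset.sum_congr rfl fun j _ => by ring

lemma integrable_quad (hS : S.PosDef) (A : Matrix (Fin n) (Fin n) ℝ) :
    Integrable (fun x => x ⬝ᵥ A *ᵥ x) (multivariateGaussian S) := by
  rw [integrable_mvg_iff hS, L1 hS]
  refine (integrable_finset_sum Finset.univ fun (p : Fin n × Fin n) _ =>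
    ((term_integrable p.1 p.2).const_mul (((Rm hS)ᵀ * A * Rm hS) p.1 p.2))).congr
    (Filter.Eventually.of_forall fun y => (expand_quad hS A y).symm)

lemma trace_M (hS : S.PosDef) (A : Matrix (Fin n) (Fin n) ℝ) :
    ((Rm hS)ᵀ * A * Rm hS).trace = (A * S).trace := by
  rw [Rm_transpose, Matrix.trace_mul_comm (Rm hS * A) (Rm hS), ← Matrix.mul_assoc,
    Rm_mul_self hS, Matrix.trace_mul_comm]

lemma integral_quad (hS : S.PosDef) (A : Matrix (Fin n) (Fin n) ℝ) :
    ∫ x, x ⬝ᵥ A *ᵥ x ∂(multivariateGaussian S) = (A * S).trace := by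
  rw [integral_mvg hS, L2 hS]
  have h1 : ∫ y, E0 y * ((Rm hS *ᵥ y) ⬝ᵥ A *ᵥ (Rm hS *ᵥ y))
      = ∑ p : Fin n × Fin n,
          ((Rm hS)ᵀ * A * Rm hS) p.1 p.2 * ∫ y : Fin n → ℝ, y p.1 * (y p.2 * E0 y) := by
    rw [show (fun y : Fin n → ℝ => E0 y * ((Rm hS *ᵥ y) ⬝ᵥ A *ᵥ (Rm hS *ᵥ y)))
        = fun y => ∑ p : Fin n × Fin n,
            ((Rm hS)ᵀ * A * Rm hS) p.1 p.2 * (y p.1 * (y p.2 * E0 y)) from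
      funext fun y => expand_quad hS A y]
    rw [integral_finset_sum Finset.univ fun (p : Fin n × Fin n) _ =>
      (term_integrable p.1 p.2).const_mul (((Rm hS)ᵀ * A * Rm hS) p.1 p.2)]
    exact Finset.sum_congr rfl fun (p : Fin n × Fin n) _ => integral_const_mul _ _
  rw [h1]
  have h2 : ∑ p : Fin n × Fin n,
      ((Rm hS)ᵀ * A * Rm hS) p.1 p.2 * ∫ y : Fin n → ℝ, y p.1 * (y p.2 * E0 y)
      = ((Rm hS)ᵀ * A * Rm hS).trace * Real.sqrt (2 * Real.pi) ^ n := by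
    simp only [term_integral]
    rw [Fintype.sum_prod_type]
    rw [Matrix.trace, Finset.sum_mul]
    refine Finset.sum_congr rfl fun i _ => ?_
    rw [Finset.sum_eq_single i]
    · simp [Matrix.diag]
    · intro j _ hj; simp [Ne.symm hj, if_neg]
    · simp
  rw [h2, trace_M hS, ← mul_assoc, mul_comm (Real.sqrt ((2 * Real.pi) ^ n)⁻¹)]
  rw [mul_assoc, const_norm, mul_one]

lemma mvg_ofReal : multivariateGaussian S
    = volume.withDensity fun x => ENNReal.ofReal (gd S x) := rfl

lemma log_gd (hS : S.PosDef) (x : Fin n → ℝ) :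
    Real.log (gd S x)
      = -(1/2) * ((n : ℝ) * Real.log (2 * Real.pi) + Real.log S.det)
        - (1/2) * (x ⬝ᵥ S⁻¹ *ᵥ x) := by
  have hc : (0:ℝ) < ((2 * Real.pi) ^ n * S.det)⁻¹ := by
    have := hS.det_pos; positivity
  rw [gd, Real.log_mul (Real.sqrt_pos.2 hc).ne' (Real.exp_ne_zero _), Real.log_exp,
    Real.log_sqrt hc.le, Real.log_inv,
    Real.log_mul (by positivity) hS.det_pos.ne', Real.log_pow]
  ring
end

end KLMVG

open KLMVG in
/-- **KL divergence between centered multivariate Gaussians.** For positive-definite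
covariance matrices `S` and `Sbar`,
`KL(N(0,S) ‖ N(0,Sbar)) = (1/2) (log det Sbar - log det S + tr (Sbar⁻¹ S) - n)`. -/
theorem klDiv_multivariateGaussian {n : ℕ}
    (S Sbar : Matrix (Fin n) (Fin n) ℝ) (hS : S.PosDef) (hSbar : Sbar.PosDef) :
    klDiv (multivariateGaussian S) (multivariateGaussian Sbar)
      = (1 / 2 : ℝ) * (Real.log Sbar.det - Real.log S.det
          + (Sbar⁻¹ * S).trace - n) := by
  set μ := multivariateGaussian S with hμ
  set ν := multivariateGaussian Sbar with hν
  haveI : IsProbabilityMeasure μ := mvg_isProb hS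
  haveI : IsProbabilityMeasure ν := mvg_isProb hSbar
  set h : (Fin n → ℝ) → ℝ≥0∞ := fun x => ENNReal.ofReal (gd S x / gd Sbar x) with hh
  have hmeas_h : Measurable h :=
    ENNReal.measurable_ofReal.comp
      ((cont_gd S).div (cont_gd Sbar) (fun x => (gd_pos hSbar x).ne')).measurable
  have claim1 : μ = ν.withDensity h := by
    rw [hμ, hν, mvg_ofReal, mvg_ofReal, ← withDensity_mul (volume : Measure (Fin n → ℝ))
      (f := fun x => ENNReal.ofReal (gd Sbar x)) (g := h)
      (ENNReal.measurable_ofReal.comp (cont_gd Sbar).measurable) hmeas_h]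
    congr 1
    funext x
    rw [Pi.mul_apply, hh, ← ENNReal.ofReal_mul (gd_pos hSbar x).le,
      mul_comm (gd Sbar x), div_mul_cancel₀ _ (gd_pos hSbar x).ne']
  have h1 : μ.rnDeriv ν =ᵐ[ν] h := by
    rw [claim1]; exact Measure.rnDeriv_withDensity ν hmeas_h
  have hac : μ ≪ ν := by rw [claim1]; exact withDensity_absolutelyContinuous ν h
  set c0 : ℝ := (1/2) * (Real.log Sbar.det - Real.log S.det) with hc0
  have llr_ae : llr μ ν =ᵐ[μ]
      fun x => c0 + ((1/2) * (x ⬝ᵥ Sbar⁻¹ *ᵥ x) - (1/2) * (x ⬝ᵥ S⁻¹ *ᵥ x)) := by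
    filter_upwards [hac.ae_le h1] with x hx
    have hlx : llr μ ν x = Real.log ((μ.rnDeriv ν x).toReal) := rfl
    rw [hlx, hx, hh, ENNReal.toReal_ofReal (div_nonneg (gd_pos hS x).le (gd_pos hSbar x).le),
      Real.log_div (gd_pos hS x).ne' (gd_pos hSbar x).ne', log_gd hS x, log_gd hSbar x, hc0]
    ring
  have hq1 : Integrable (fun x => (1/2 : ℝ) * (x ⬝ᵥ Sbar⁻¹ *ᵥ x)) μ :=
    (integrable_quad hS Sbar⁻¹).const_mul _
  have hq2 : Integrable (fun x => (1/2 : ℝ) * (x ⬝ᵥ S⁻¹ *ᵥ x)) μ :=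
    (integrable_quad hS S⁻¹).const_mul _
  have hSS : S⁻¹ * S = 1 := Matrix.nonsing_inv_mul S (isUnit_iff_ne_zero.2 hS.det_pos.ne')
  have hq12 : Integrable
      (fun x => (1/2 : ℝ) * (x ⬝ᵥ Sbar⁻¹ *ᵥ x) - (1/2 : ℝ) * (x ⬝ᵥ S⁻¹ *ᵥ x)) μ := hq1.sub hq2
  rw [show klDiv μ ν = ∫ x, llr μ ν x ∂μ from rfl, integral_congr_ae llr_ae,
    integral_add (integrable_const c0) hq12, integral_sub hq1 hq2,
    integral_const, integral_const_mul, integral_const_mul, integral_quad hS,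
    integral_quad hS, hSS, Matrix.trace_one]
  simp only [probReal_univ, ENNReal.toReal_one, one_smul, Fintype.card_fin]
  rw [hc0]
  ring
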